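/- Let H_0 = (S,T;F_0) be a simple bigraph with bipartite complement G_0, r_S the rank function of a matroid on S, p_T a positively intersecting supermodular set-function on T, and m_V = (m_S, m_T) a degree-specification with m̃_S(S) = m̃_T(T) = γ satisfying Condition (★). If p_1(V') > 0 for a set V' ⊆ V, then some arc of the orientation of G_0 from S to T enters V' (equivalently, there exist s ∈ S − V' and t ∈ V' ∩ T with st ∉ F_0). -/
import Mathlib


open Finset

variable {α : Type*} [DecidableEq α]

/-- The number of edges of the bigraph with edge set `E` connecting `X ⊆ S` and `Y ⊆ T`. -/
def edgesBetween (E : Finset (α × α)) (X Y : Finset α) : ℕ :=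
  (E.filter (fun e => e.1 ∈ X ∧ e.2 ∈ Y)).card

/-- The set of neighbours (in `S`) of a subset `Z ⊆ T` in the bigraph with edge set `E`. -/
def nbrs (E : Finset (α × α)) (Z : Finset α) : Finset α :=
  (E.filter (fun e => e.2 ∈ Z)).image Prod.fst

/-- The degree of a node `v ∈ S` in the bigraph with edge set `E`. -/
def degS (E : Finset (α × α)) (v : α) : ℕ := (E.filter (fun e => e.1 = v)).card

/-- The degree of a node `v ∈ T` in the bigraph with edge set `E`. -/
def degT (E : Finset (α × α)) (v : α) : ℕ := (E.filter (fun e => e.2 = v)).card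

/-- `r` is the rank function of a matroid on the ground set `S`. -/
def IsRankFn (S : Finset α) (r : Finset α → ℕ) : Prop :=
  (∀ X, X ⊆ S → r X ≤ X.card) ∧
  (∀ X Y, X ⊆ Y → Y ⊆ S → r X ≤ r Y) ∧
  (∀ X Y, X ⊆ S → Y ⊆ S → r (X ∪ Y) + r (X ∩ Y) ≤ r X + r Y)

/-- `V' ∈ ℋ₀`: no arc of the orientation of `H₀` (from `S` to `T`) enters `V'`. -/
def memH₀ (F₀ : Finset (α × α)) (V' : Finset α) : Prop :=
  ∀ e ∈ F₀, e.2 ∈ V' → e.1 ∈ V'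

instance (F₀ : Finset (α × α)) (V' : Finset α) : Decidable (memH₀ F₀ V') := by
  unfold memH₀; infer_instance

/-- The set-function `p₀` of the paper:
`p₀(V') = max{p_T({y}) − r_S(X), m_T(y) − |X| + d_{H₀}(y)}` if `V' = X ∪ {y} ∈ ℋ₀`
with `X ⊆ S`, `y ∈ T`; `p₀(V') = p_T(Y) − r_S(X)` if `V' = X ∪ Y ∈ ℋ₀` with `X ⊆ S`,
`Y ⊆ T`, `|Y| ≥ 2`; and `p₀(V') = 0` otherwise. -/
def p₀ (S T : Finset α) (F₀ : Finset (α × α)) (rS : Finset α → ℕ)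
    (pT : Finset α → ℤ) (m : α → ℤ) (V' : Finset α) : ℤ :=
  if V' ⊆ S ∪ T ∧ memH₀ F₀ V' then
    if (V' ∩ T).card = 1 then
      max (pT (V' ∩ T) - (rS (V' ∩ S) : ℤ))
        ((∑ y ∈ V' ∩ T, m y) - ((V' ∩ S).card : ℤ) + ∑ y ∈ V' ∩ T, (degT F₀ y : ℤ))
    else if 2 ≤ (V' ∩ T).card then pT (V' ∩ T) - (rS (V' ∩ S) : ℤ)
    else 0
  else 0

/-- `V_s = {v ∈ V − s : sv ∉ F₀}`. -/
def Vs (S T : Finset α) (F₀ : Finset (α × α)) (s : α) : Finset α :=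
  ((S ∪ T).erase s).filter (fun v => (s, v) ∉ F₀)

/-- The set-function `p₁` of the paper: `p₁(V_s) = m_S(s)` for `s ∈ S`
(such an `s` is unique when it exists), and `p₁(V') = p₀(V')` otherwise. -/
def p₁ (S T : Finset α) (F₀ : Finset (α × α)) (rS : Finset α → ℕ)
    (pT : Finset α → ℤ) (m : α → ℤ) (V' : Finset α) : ℤ :=
  if ∃ s ∈ S, V' = Vs S T F₀ s then
    ∑ s ∈ S.filter (fun s => V' = Vs S T F₀ s), m s
  else p₀ S T F₀ rS pT m V'

/-- Condition (★) of the paper: for every `Y ⊆ T`, `X ⊆ S` and every subpartition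
`𝒯 = {T₁, …, T_q}` of `T − Y` into nonempty sets,
`m̃(X) + m̃(Y) − d_{G₀}(X,Y) + ∑ᵢ (p_T(Tᵢ) − r_S(X ∪ Γ_{H₀}(Tᵢ))) ≤ γ`,
where `G₀ = (S ×ˢ T) \ F₀` is the bipartite complement of `H₀`. -/
def StarCond (S T : Finset α) (F₀ : Finset (α × α)) (rS : Finset α → ℕ)
    (pT : Finset α → ℤ) (m : α → ℤ) (γ : ℤ) : Prop :=
  ∀ X ⊆ S, ∀ Y ⊆ T, ∀ 𝒯 : Finset (Finset α),
    (∀ Ti ∈ 𝒯, Ti.Nonempty ∧ Ti ⊆ T \ Y) →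
    (∀ T₁ ∈ 𝒯, ∀ T₂ ∈ 𝒯, T₁ ≠ T₂ → Disjoint T₁ T₂) →
    (∑ v ∈ X, m v) + (∑ v ∈ Y, m v)
        - (edgesBetween ((S ×ˢ T) \ F₀) X Y : ℤ)
        + ∑ Ti ∈ 𝒯, (pT Ti - (rS (X ∪ nbrs F₀ Ti) : ℤ)) ≤ γ


lemma edgesBetween_empty_right (E : Finset (α × α)) (X : Finset α) :
    edgesBetween E X ∅ = 0 := by
  unfold edgesBetween
  rw [Finset.card_eq_zero, Finset.filter_eq_empty_iff]
  intro e _; simp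

lemma edgesBetween_singleton_T (S T : Finset α) (F₀ : Finset (α × α)) (s : α)
    (hall : ∀ t ∈ T, (s, t) ∈ F₀) :
    edgesBetween ((S ×ˢ T) \ F₀) {s} T = 0 := by
  unfold edgesBetween
  rw [Finset.card_eq_zero, Finset.filter_eq_empty_iff]
  rintro e he ⟨h1, h2⟩
  rw [Finset.mem_sdiff] at he
  rw [Finset.mem_singleton] at h1
  exact he.2 (by rw [← Prod.mk.eta (p := e), h1]; exact hall e.2 h2)

lemma edgesBetween_S_singleton (S T : Finset α) (F₀ : Finset (α × α))
    (hF₀ : F₀ ⊆ S ×ˢ T) (y : α) (hy : y ∈ T) :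
    edgesBetween ((S ×ˢ T) \ F₀) S {y} + degT F₀ y = S.card := by
  have h1 : edgesBetween ((S ×ˢ T) \ F₀) S {y} =
      (S.filter (fun s => (s, y) ∉ F₀)).card := by
    unfold edgesBetween
    apply Finset.card_bij (fun e _ => e.1)
    · rintro e he
      rw [Finset.mem_filter, Finset.mem_sdiff] at he
      obtain ⟨⟨_, hne⟩, h1, h2⟩ := he
      rw [Finset.mem_singleton] at h2
      rw [Finset.mem_filter]
      exact ⟨h1, by rwa [← h2, Prod.mk.eta]⟩
    · rintro e he e' he' h
      rw [Finset.mem_filter, Finset.mem_sdiff] at he he'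
      have h2 := he.2.2; have h2' := he'.2.2
      rw [Finset.mem_singleton] at h2 h2'
      exact Prod.ext h (h2.trans h2'.symm)
    · rintro s hs
      rw [Finset.mem_filter] at hs
      refine ⟨(s, y), ?_, rfl⟩
      rw [Finset.mem_filter, Finset.mem_sdiff]
      exact ⟨⟨Finset.mem_product.mpr ⟨hs.1, hy⟩, hs.2⟩, hs.1, Finset.mem_singleton_self y⟩
  have h2 : degT F₀ y = (S.filter (fun s => (s, y) ∈ F₀)).card := by
    unfold degT
    apply Finset.card_bij (fun e _ => e.1)
    · rintro e he
      rw [Finset.mem_filter] at he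
      rw [Finset.mem_filter]
      have := Finset.mem_product.mp (hF₀ he.1)
      exact ⟨this.1, by rw [← he.2, Prod.mk.eta]; exact he.1⟩
    · rintro e he e' he' h
      rw [Finset.mem_filter] at he he'
      exact Prod.ext h (he.2.trans he'.2.symm)
    · rintro s hs
      rw [Finset.mem_filter] at hs
      exact ⟨(s, y), Finset.mem_filter.mpr ⟨hs.2, rfl⟩, rfl⟩
  rw [h1, h2, add_comm]
  exact Finset.card_filter_add_card_filter_not _

lemma nbrs_subset_S (S T : Finset α) (F₀ : Finset (α × α)) (hF₀ : F₀ ⊆ S ×ˢ T)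
    (Z : Finset α) : nbrs F₀ Z ⊆ S := by
  intro x hx
  unfold nbrs at hx
  obtain ⟨e, he, rfl⟩ := Finset.mem_image.mp hx
  exact (Finset.mem_product.mp (hF₀ (Finset.mem_filter.mp he).1)).1

/-- **Claim 7 of the paper.** Under Condition (★), if `p₁(V') > 0` for a set
`V' ⊆ V = S ∪ T`, then some arc of the orientation of `G₀` (the bipartite complement
of `H₀`) from `S` to `T` enters `V'`: there are `s ∈ S − V'` and `t ∈ V' ∩ T`
with `st ∉ F₀`. -/
theorem G₀_covers_sets_with_positive_p₁
    (S T : Finset α) (hST : Disjoint S T) (hS : S.Nonempty) (hT : T.Nonempty)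
    (F₀ : Finset (α × α)) (hF₀ : F₀ ⊆ S ×ˢ T)
    (rS : Finset α → ℕ) (hrS : IsRankFn S rS)
    (pT : Finset α → ℤ)
    -- `p_T` is positively intersecting supermodular on `T`
    (hpT : ∀ X Y : Finset α, X ⊆ T → Y ⊆ T → (X ∩ Y).Nonempty →
      0 < pT X → 0 < pT Y → pT X + pT Y ≤ pT (X ∩ Y) + pT (X ∪ Y))
    (m : α → ℤ) (γ : ℤ)
    (hγS : ∑ v ∈ S, m v = γ) (hγT : ∑ v ∈ T, m v = γ)
    (hstar : StarCond S T F₀ rS pT m γ) :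
    ∀ V' : Finset α, V' ⊆ S ∪ T → 0 < p₁ S T F₀ rS pT m V' →
      ∃ s ∈ S, s ∉ V' ∧ ∃ t ∈ T, t ∈ V' ∧ (s, t) ∉ F₀ := by
  intro V' hV' hpos
  by_contra hcon
  push_neg at hcon
  -- hcon : ∀ s ∈ S, s ∉ V' → ∀ t ∈ T, t ∈ V' → (s, t) ∈ F₀
  unfold p₁ at hpos
  split_ifs at hpos with hex
  · -- V' = Vs s case
    obtain ⟨s, hs, hms⟩ := Finset.exists_lt_of_sum_lt
      (show ∑ x ∈ S.filter (fun s => V' = Vs S T F₀ s), (0:ℤ) <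
            ∑ x ∈ S.filter (fun s => V' = Vs S T F₀ s), m x by simpa using hpos)
    rw [Finset.mem_filter] at hs
    obtain ⟨hsS, hVs⟩ := hs
    have hsV' : s ∉ V' := by
      rw [hVs]; unfold Vs
      intro h
      exact Finset.notMem_erase s (S ∪ T) (Finset.mem_filter.mp h).1
    by_cases hallt : ∀ t ∈ T, (s, t) ∈ F₀
    · have key := hstar {s} (Finset.singleton_subset_iff.mpr hsS) T Finset.Subset.rfl ∅
        (by simp) (by simp)
      rw [edgesBetween_singleton_T S T F₀ s hallt] at key
      simp only [Finset.sum_singleton, Finset.sum_empty, hγT] at key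
      omega
    · push_neg at hallt
      obtain ⟨t, ht, hst⟩ := hallt
      have htV' : t ∈ V' := by
        rw [hVs]; unfold Vs
        rw [Finset.mem_filter, Finset.mem_erase]
        refine ⟨⟨fun h => Finset.disjoint_left.mp hST hsS (h ▸ ht), Finset.mem_union_right _ ht⟩, hst⟩
      exact hst (hcon s hsS hsV' t ht htV')
  · -- p₀ case
    unfold p₀ at hpos
    split_ifs at hpos with h1 h2 h3
    · -- |V' ∩ T| = 1
      obtain ⟨hsub, hmem⟩ := h1
      obtain ⟨y, hy⟩ := Finset.card_eq_one.mp h2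
      have hyT : y ∈ T := (Finset.mem_inter.mp (hy ▸ Finset.mem_singleton_self y)).2
      have hyV' : y ∈ V' := (Finset.mem_inter.mp (hy ▸ Finset.mem_singleton_self y)).1
      have hSV' : S ⊆ V' := by
        intro s hsS
        by_contra hsV'
        exact hsV' (hmem (s, y) (hcon s hsS hsV' y hyT hyV') hyV')
      have hXS : V' ∩ S = S := by
        apply Finset.Subset.antisymm (Finset.inter_subset_right)
        intro s hsS; exact Finset.mem_inter.mpr ⟨hSV' hsS, hsS⟩
      rcases lt_max_iff.mp hpos with hA | hB
      · have key := hstar S Finset.Subset.rfl ∅ (Finset.empty_subset T) {V' ∩ T}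
          (by intro Ti hTi
              rw [Finset.mem_singleton] at hTi
              subst hTi
              exact ⟨Finset.card_pos.mp (by omega), by rw [Finset.sdiff_empty]; exact Finset.inter_subset_right⟩)
          (by intro T₁ hT1 T₂ hT2 hne
              rw [Finset.mem_singleton] at hT1 hT2
              exact absurd (hT1.trans hT2.symm) hne)
        rw [edgesBetween_empty_right, Finset.sum_singleton,
          Finset.union_eq_left.mpr (nbrs_subset_S S T F₀ hF₀ _)] at key
        rw [hXS] at hA
        simp only [Finset.sum_empty, hγS] at key
        omega
      · have key := hstar S Finset.Subset.rfl {y} (Finset.singleton_subset_iff.mpr hyT) ∅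
          (by simp) (by simp)
        have hcount := edgesBetween_S_singleton S T F₀ hF₀ y hyT
        simp only [Finset.sum_singleton, Finset.sum_empty, hγS, add_zero] at key
        rw [hXS, hy, Finset.sum_singleton, Finset.sum_singleton] at hB
        omega
    · -- |V' ∩ T| ≥ 2
      obtain ⟨hsub, hmem⟩ := h1
      obtain ⟨y, hy⟩ := Finset.card_pos.mp (show 0 < (V' ∩ T).card by omega)
      have hyT : y ∈ T := (Finset.mem_inter.mp hy).2
      have hyV' : y ∈ V' := (Finset.mem_inter.mp hy).1
      have hSV' : S ⊆ V' := by
        intro s hsS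
        by_contra hsV'
        exact hsV' (hmem (s, y) (hcon s hsS hsV' y hyT hyV') hyV')
      have hXS : V' ∩ S = S := by
        apply Finset.Subset.antisymm (Finset.inter_subset_right)
        intro s hsS; exact Finset.mem_inter.mpr ⟨hSV' hsS, hsS⟩
      have key := hstar S Finset.Subset.rfl ∅ (Finset.empty_subset T) {V' ∩ T}
        (by intro Ti hTi
            rw [Finset.mem_singleton] at hTi
            subst hTi
            exact ⟨⟨y, hy⟩, by rw [Finset.sdiff_empty]; exact Finset.inter_subset_right⟩)
        (by intro T₁ hT1 T₂ hT2 hne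
            rw [Finset.mem_singleton] at hT1 hT2
            exact absurd (hT1.trans hT2.symm) hne)
      rw [edgesBetween_empty_right, Finset.sum_singleton,
        Finset.union_eq_left.mpr (nbrs_subset_S S T F₀ hF₀ _)] at key
      rw [hXS] at hpos
      simp only [Finset.sum_empty, hγS] at key
      omega
    · exact absurd hpos (lt_irrefl 0)
    · exact absurd hpos (lt_irrefl 0)
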